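/- Suppose polynomials H_{n,m} satisfy the ladder relations H_{n,m}' = n H_{n−1,m} + m H_{n,m−1}, H_{n−1,m}' = −2H_{n,m} + (2x−c₁)H_{n−1,m}, and H_{n,m−1}' = −2H_{n,m} + (2x−c₂)H_{n,m−1}. Then H_{n,m} satisfies H_{n,m}''' + (c₁+c₂−4x)H_{n,m}'' + (c₁(c₂−2x)+2(m+n−1−c₂x+2x²))H_{n,m}' + 2(c₁m+c₂n−2(m+n)x)H_{n,m} = 0. -/

import Mathlib

/-- The formal derivation of the third-order ODE from the first-order
ladder system for multiple Hermite polynomials. Here `f = H_{n,m}`, `g = H_{n-1,m}`,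
`h = H_{n,m-1}` with `n, m ≥ 1`. -/
theorem ladder_implies_third_order_ode (c₁ c₂ : ℝ) (n m : ℕ)
    (hn : 1 ≤ n) (hm : 1 ≤ m)
    (f g h : ℝ → ℝ)
    (hf : ∀ x, HasDerivAt f ((n : ℝ) * g x + (m : ℝ) * h x) x)
    (hg : ∀ x, HasDerivAt g (-2 * f x + (2 * x - c₁) * g x) x)
    (hh : ∀ x, HasDerivAt h (-2 * f x + (2 * x - c₂) * h x) x) :
    ∀ x : ℝ,
      iteratedDeriv 3 f x + (c₁ + c₂ - 4 * x) * iteratedDeriv 2 f x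
      + (c₁ * (c₂ - 2 * x) + 2 * ((m : ℝ) + n - 1 - c₂ * x + 2 * x ^ 2)) * deriv f x
      + 2 * (c₁ * m + c₂ * n - 2 * ((m : ℝ) + n) * x) * f x = 0 := by
  set f1 : ℝ → ℝ := fun x => (n : ℝ) * g x + (m : ℝ) * h x with hf1
  set f2 : ℝ → ℝ := fun x => (n : ℝ) * (-2 * f x + (2 * x - c₁) * g x)
      + (m : ℝ) * (-2 * f x + (2 * x - c₂) * h x) with hf2
  set f3 : ℝ → ℝ := fun x => (n : ℝ) * (-2 * f1 x + (2 * g x + (2 * x - c₁) * (-2 * f x + (2 * x - c₁) * g x)))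
      + (m : ℝ) * (-2 * f1 x + (2 * h x + (2 * x - c₂) * (-2 * f x + (2 * x - c₂) * h x))) with hf3
  have h1 : ∀ x, HasDerivAt f1 (f2 x) x := by
    intro x
    exact ((hg x).const_mul (n : ℝ)).add ((hh x).const_mul (m : ℝ))
  have h2 : ∀ x, HasDerivAt f2 (f3 x) x := by
    intro x
    have hgterm : HasDerivAt (fun x => -2 * f x + (2 * x - c₁) * g x)
        (-2 * f1 x + (2 * g x + (2 * x - c₁) * (-2 * f x + (2 * x - c₁) * g x))) x := by
      have d1 : HasDerivAt (fun x : ℝ => 2 * x - c₁) 2 x := by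
        simpa using ((hasDerivAt_id x).const_mul 2).sub_const c₁
      have := ((hf x).const_mul (-2 : ℝ)).add (d1.mul (hg x))
      simpa [hf1, mul_comm, Pi.add_def, Pi.mul_def] using this
    have hhterm : HasDerivAt (fun x => -2 * f x + (2 * x - c₂) * h x)
        (-2 * f1 x + (2 * h x + (2 * x - c₂) * (-2 * f x + (2 * x - c₂) * h x))) x := by
      have d1 : HasDerivAt (fun x : ℝ => 2 * x - c₂) 2 x := by
        simpa using ((hasDerivAt_id x).const_mul 2).sub_const c₂
      have := ((hf x).const_mul (-2 : ℝ)).add (d1.mul (hh x))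
      simpa [hf1, mul_comm, Pi.add_def, Pi.mul_def] using this
    exact (hgterm.const_mul (n : ℝ)).add (hhterm.const_mul (m : ℝ))
  have df : deriv f = f1 := funext fun x => (hf x).deriv
  have df1 : deriv f1 = f2 := funext fun x => (h1 x).deriv
  have df2 : deriv f2 = f3 := funext fun x => (h2 x).deriv
  have e2 : iteratedDeriv 2 f = f2 := by
    rw [iteratedDeriv_succ, iteratedDeriv_one, df, df1]
  have e3 : iteratedDeriv 3 f = f3 := by
    rw [iteratedDeriv_succ, e2, df2]
  intro x
  rw [e2, e3, df, hf1, hf2, hf3]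
  ring
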